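/- For each fixed y > 0, the function x ↦ (x+y)ln(x+y) - x ln x - y ln y - ((2-x)ln 2 + (1-x)ln(1-x) - (2-x)ln(2-x)) on (0,1) is strictly concave, attains its maximum at x = sqrt(y(y+2)) - y, and the maximum value equals (1+y/2)ln(1+y/2) - (y/2)ln(y/2). -/

import Mathlib

open Real

/-- For fixed `y > 0`, `x ↦ U(x,y) - I^SRWB(x)` is strictly concave on `(0,1)`, maximized at
`x = √(y(y+2)) - y`, with maximum value `𝒰^SRWB(y)`. -/
theorem WSRWB_strictConcave_max (y : ℝ) (hy : 0 < y) :
    StrictConcaveOn ℝ (Set.Ioo (0 : ℝ) 1)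
      (fun x : ℝ => (x + y) * log (x + y) - x * log x - y * log y
        - ((2 - x) * log 2 + (1 - x) * log (1 - x) - (2 - x) * log (2 - x))) ∧
    (∀ x ∈ Set.Ioo (0 : ℝ) 1, x ≠ Real.sqrt (y * (y + 2)) - y →
      ((x + y) * log (x + y) - x * log x - y * log y
        - ((2 - x) * log 2 + (1 - x) * log (1 - x) - (2 - x) * log (2 - x)))
      < ((Real.sqrt (y * (y + 2)) - y + y) * log (Real.sqrt (y * (y + 2)) - y + y)
          - (Real.sqrt (y * (y + 2)) - y) * log (Real.sqrt (y * (y + 2)) - y) - y * log y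
        - ((2 - (Real.sqrt (y * (y + 2)) - y)) * log 2
          + (1 - (Real.sqrt (y * (y + 2)) - y)) * log (1 - (Real.sqrt (y * (y + 2)) - y))
          - (2 - (Real.sqrt (y * (y + 2)) - y)) * log (2 - (Real.sqrt (y * (y + 2)) - y))))) ∧
    ((Real.sqrt (y * (y + 2)) - y + y) * log (Real.sqrt (y * (y + 2)) - y + y)
        - (Real.sqrt (y * (y + 2)) - y) * log (Real.sqrt (y * (y + 2)) - y) - y * log y
      - ((2 - (Real.sqrt (y * (y + 2)) - y)) * log 2
        + (1 - (Real.sqrt (y * (y + 2)) - y)) * log (1 - (Real.sqrt (y * (y + 2)) - y))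
        - (2 - (Real.sqrt (y * (y + 2)) - y)) * log (2 - (Real.sqrt (y * (y + 2)) - y))))
      = (1 + y / 2) * log (1 + y / 2) - (y / 2) * log (y / 2) := by
  have hy2 : (0:ℝ) < y * (y + 2) := by nlinarith
  set s : ℝ := Real.sqrt (y * (y + 2)) with hsdef
  set f : ℝ → ℝ := fun x : ℝ => (x + y) * log (x + y) - x * log x - y * log y
        - ((2 - x) * log 2 + (1 - x) * log (1 - x) - (2 - x) * log (2 - x)) with hfdef
  set g : ℝ → ℝ := fun x : ℝ => log (x + y) - log x + log 2 + log (1 - x) - log (2 - x)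
    with hgdef
  have hs0 : 0 < s := Real.sqrt_pos.mpr hy2
  have hs2 : s ^ 2 = y * (y + 2) := Real.sq_sqrt hy2.le
  have hys : y < s := (Real.lt_sqrt hy.le).mpr (by nlinarith)
  have hs1 : s < 1 + y := (Real.sqrt_lt' (by linarith)).mpr (by nlinarith)
  -- first derivative
  have hder : ∀ x : ℝ, 0 < x → x < 1 → HasDerivAt f (g x) x := by
    intro x hx0 hx1
    have hxy : x + y ≠ 0 := by positivity
    have h1x : (1:ℝ) - x ≠ 0 := by linarith
    have h2x : (2:ℝ) - x ≠ 0 := by linarith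
    have A : HasDerivAt (fun x : ℝ => (x + y) * log (x + y)) (log (x + y) + 1) x := by
      simpa [Function.comp_def] using (Real.hasDerivAt_mul_log hxy).comp x ((hasDerivAt_id x).add_const y)
    have B : HasDerivAt (fun x : ℝ => x * log x) (log x + 1) x := Real.hasDerivAt_mul_log hx0.ne'
    have C : HasDerivAt (fun _ : ℝ => y * log y) 0 x := hasDerivAt_const x (y * log y)
    have D : HasDerivAt (fun x : ℝ => (2 - x) * log 2) (-log 2) x := by
      simpa using ((hasDerivAt_id x).const_sub 2).mul_const (log 2)
    have E : HasDerivAt (fun x : ℝ => (1 - x) * log (1 - x)) (-(log (1 - x) + 1)) x := by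
      simpa [Function.comp_def] using (Real.hasDerivAt_mul_log h1x).comp x ((hasDerivAt_id x).const_sub 1)
    have F : HasDerivAt (fun x : ℝ => (2 - x) * log (2 - x)) (-(log (2 - x) + 1)) x := by
      simpa [Function.comp_def] using (Real.hasDerivAt_mul_log h2x).comp x ((hasDerivAt_id x).const_sub 2)
    exact (((A.sub B).sub C).sub ((D.add E).sub F)).congr_deriv (by simp only [hgdef]; ring)
  -- second derivative
  have hder2 : ∀ x : ℝ, 0 < x → x < 1 →
      HasDerivAt g ((x + y)⁻¹ - x⁻¹ - (1 - x)⁻¹ + (2 - x)⁻¹) x := by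
    intro x hx0 hx1
    have hxy : x + y ≠ 0 := by positivity
    have h1x : (1:ℝ) - x ≠ 0 := by linarith
    have h2x : (2:ℝ) - x ≠ 0 := by linarith
    have a : HasDerivAt (fun x : ℝ => log (x + y)) (x + y)⁻¹ x := by
      simpa [Function.comp_def] using (Real.hasDerivAt_log hxy).comp x ((hasDerivAt_id x).add_const y)
    have b : HasDerivAt (fun x : ℝ => log x) x⁻¹ x := Real.hasDerivAt_log hx0.ne'
    have c : HasDerivAt (fun _ : ℝ => log 2) 0 x := hasDerivAt_const x (log 2)
    have d : HasDerivAt (fun x : ℝ => log (1 - x)) (-(1 - x)⁻¹) x := by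
      simpa [Function.comp_def] using (Real.hasDerivAt_log h1x).comp x ((hasDerivAt_id x).const_sub 1)
    have e : HasDerivAt (fun x : ℝ => log (2 - x)) (-(2 - x)⁻¹) x := by
      simpa [Function.comp_def] using (Real.hasDerivAt_log h2x).comp x ((hasDerivAt_id x).const_sub 2)
    exact ((((a.sub b).add c).add d).sub e).congr_deriv (by ring)
  -- sign of the first derivative
  have hgsign : ∀ z : ℝ, 0 < z → z < 1 → z + y ≠ s → (g z - 0) * (z + y - s) < 0 := by
    intro z hz0 hz1 hzs
    have hzy : (0:ℝ) < z + y := by linarith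
    have h1z : (0:ℝ) < 1 - z := by linarith
    have h2z : (0:ℝ) < 2 - z := by linarith
    rcases lt_or_gt_of_ne hzs with h | h
    · -- z + y < s, g z > 0
      have hsq : (z + y) ^ 2 < s ^ 2 := by nlinarith
      have key : z * (2 - z) < 2 * ((z + y) * (1 - z)) := by nlinarith
      have l1 : log (z * (2 - z)) < log (2 * ((z + y) * (1 - z))) :=
        Real.log_lt_log (by positivity) key
      rw [Real.log_mul hz0.ne' h2z.ne', Real.log_mul (by norm_num) (by positivity),
        Real.log_mul hzy.ne' h1z.ne'] at l1
      have : 0 < g z := by simp only [hgdef]; linarith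
      nlinarith
    · -- z + y > s, g z < 0
      have hsq : s ^ 2 < (z + y) ^ 2 := by nlinarith
      have key : 2 * ((z + y) * (1 - z)) < z * (2 - z) := by nlinarith
      have l1 : log (2 * ((z + y) * (1 - z))) < log (z * (2 - z)) :=
        Real.log_lt_log (by positivity) key
      rw [Real.log_mul hz0.ne' h2z.ne', Real.log_mul (by norm_num) (by positivity),
        Real.log_mul hzy.ne' h1z.ne'] at l1
      have : g z < 0 := by simp only [hgdef]; linarith
      nlinarith
  -- strict concavity
  have hconc : StrictConcaveOn ℝ (Set.Ioo (0 : ℝ) 1) f := by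
    apply strictConcaveOn_of_deriv2_neg (convex_Ioo 0 1)
      (fun x hx => (hder x hx.1 hx.2).continuousAt.continuousWithinAt)
    intro x hx
    rw [interior_Ioo] at hx
    have hdfg : deriv f =ᶠ[nhds x] g :=
      Filter.eventuallyEq_of_mem (isOpen_Ioo.mem_nhds hx) (fun z hz => (hder z hz.1 hz.2).deriv)
    have h2 : deriv (deriv f) x = (x + y)⁻¹ - x⁻¹ - (1 - x)⁻¹ + (2 - x)⁻¹ := by
      rw [hdfg.deriv_eq, (hder2 x hx.1 hx.2).deriv]
    show deriv^[2] f x < 0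
    have hit : deriv^[2] f x = deriv (deriv f) x := by
      simp [Function.iterate_succ, Function.comp]
    rw [hit, h2]
    have hx0 := hx.1
    have hx1 := hx.2
    have i1 : (x + y)⁻¹ < x⁻¹ := by
      rw [inv_lt_inv₀ (by linarith) hx0]; linarith
    have i2 : (2 - x)⁻¹ < (1 - x)⁻¹ := by
      rw [inv_lt_inv₀ (by linarith) (by linarith)]; linarith
    linarith
  -- strict maximality
  have hmax : ∀ x ∈ Set.Ioo (0 : ℝ) 1, x ≠ s - y → f x < f (s - y) := by
    intro x hx hne
    have ha0 : 0 < s - y := by linarith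
    have ha1 : s - y < 1 := by linarith
    rcases lt_or_gt_of_ne hne with hlt | hgt
    · have hmono : StrictMonoOn f (Set.Icc x (s - y)) := by
        apply strictMonoOn_of_deriv_pos (convex_Icc _ _)
        · intro z hz
          exact (hder z (lt_of_lt_of_le hx.1 hz.1)
            (lt_of_le_of_lt hz.2 ha1)).continuousAt.continuousWithinAt
        · intro z hz
          rw [interior_Icc] at hz
          have hz0 : 0 < z := lt_trans hx.1 hz.1
          have hz1 : z < 1 := lt_trans hz.2 ha1
          rw [(hder z hz0 hz1).deriv]
          have := hgsign z hz0 hz1 (by intro h; nlinarith [hz.2])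
          nlinarith [hz.2]
      exact hmono (Set.mem_Icc.mpr ⟨le_refl x, hlt.le⟩)
        (Set.mem_Icc.mpr ⟨hlt.le, le_refl _⟩) hlt
    · have hanti : StrictAntiOn f (Set.Icc (s - y) x) := by
        apply strictAntiOn_of_deriv_neg (convex_Icc _ _)
        · intro z hz
          exact (hder z (lt_of_lt_of_le ha0 hz.1)
            (lt_of_le_of_lt hz.2 hx.2)).continuousAt.continuousWithinAt
        · intro z hz
          rw [interior_Icc] at hz
          have hz0 : 0 < z := lt_trans ha0 hz.1
          have hz1 : z < 1 := lt_trans hz.2 hx.2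
          rw [(hder z hz0 hz1).deriv]
          have := hgsign z hz0 hz1 (by intro h; nlinarith [hz.1])
          nlinarith [hz.1]
      exact hanti (Set.mem_Icc.mpr ⟨le_refl _, hgt.le⟩)
        (Set.mem_Icc.mpr ⟨hgt.le, le_refl x⟩) hgt
  refine ⟨hconc, fun x hx hne => hmax x hx hne, ?_⟩
  -- value at the maximum
  show f (s - y) = (1 + y / 2) * log (1 + y / 2) - (y / 2) * log (y / 2)
  have hsy : s - y + y = s := by ring
  have hay0 : s - y ≠ 0 := by linarith
  have hty : s + y ≠ 0 := by positivity
  have h1a : (1 : ℝ) - (s - y) ≠ 0 := by intro h; nlinarith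
  have h2a : (2 : ℝ) - (s - y) ≠ 0 := by intro h; nlinarith
  have hyne : y ≠ 0 := hy.ne'
  have hy2ne : y + 2 ≠ 0 := by positivity
  have e_a : log (s - y) = log 2 + log y - log (s + y) := by
    have h : (s - y) * (s + y) = 2 * y := by linear_combination hs2
    have := congrArg log h
    rw [Real.log_mul hay0 hty, Real.log_mul (by norm_num) hyne] at this
    linarith
  have e_1a : log (1 - (s - y)) = log 2 + log y - 2 * log (s + y) := by
    have h : (1 - (s - y)) * ((s + y) * (s + y)) = 2 * y := by
      linear_combination (1 - y - s) * hs2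
    have := congrArg log h
    rw [Real.log_mul h1a (by positivity), Real.log_mul hty hty,
      Real.log_mul (by norm_num) hyne] at this
    linarith
  have e_2a : log (2 - (s - y)) = log 2 + log s - log (s + y) := by
    have h : (2 - (s - y)) * (s + y) = 2 * s := by linear_combination -hs2
    have := congrArg log h
    rw [Real.log_mul h2a hty, Real.log_mul (by norm_num) hs0.ne'] at this
    linarith
  have e_s : log s = (log y + log (y + 2)) / 2 := by
    have h : s * s = y * (y + 2) := by linear_combination hs2
    have := congrArg log h
    rw [Real.log_mul hs0.ne' hs0.ne', Real.log_mul hyne hy2ne] at this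
    linarith
  have e6 : log (1 + y / 2) = log (y + 2) - log 2 := by
    rw [show (1 : ℝ) + y / 2 = (y + 2) / 2 by ring, Real.log_div hy2ne (by norm_num)]
  have e7 : log (y / 2) = log y - log 2 := Real.log_div hyne (by norm_num)
  simp only [hfdef]
  rw [hsy, e_a, e_1a, e_2a, e_s, e6, e7]
  ring
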